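/- arXiv:1303.5046 — 7 statements merged into one kernel-verified Lean document; each statement's English description precedes it below -/
import Mathlib

section
/- For p ∈ (0, ∞), the map M ↦ tr(M^{-p}) is strictly antitonic on positive definite matrices: if M₁, M₂ are symmetric positive definite with M₂ - M₁ positive semidefinite and M₁ ≠ M₂, then tr(M₂^{-p}) < tr(M₁^{-p}); hence Φ_p⁺ is strictly isotonic on positive definite matrices. -/
open Matrix Real

/-- Real power of a square matrix, via spectral decomposition when the matrix
is Hermitian (symmetric), and junk value `0` otherwise. -/
noncomputable def matRpow {m : ℕ} (M : Matrix (Fin m) (Fin m) ℝ) (r : ℝ) :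
    Matrix (Fin m) (Fin m) ℝ :=
  if h : M.IsHermitian then
    (h.eigenvectorUnitary : Matrix (Fin m) (Fin m) ℝ) *
      Matrix.diagonal (fun i => h.eigenvalues i ^ r) *
      star (h.eigenvectorUnitary : Matrix (Fin m) (Fin m) ℝ)
  else 0

/-- The positively homogeneous Kiefer criterion Φ_p⁺. -/
noncomputable def PhiP (m : ℕ) (p : ℝ) (N : Matrix (Fin m) (Fin m) ℝ) : ℝ :=
  ((1 / (m : ℝ)) * (matRpow N (-p)).trace) ^ (-1 / p)


lemma convexOn_rpow_neg {p : ℝ} (hp : 0 < p) :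
    ConvexOn ℝ (Set.Ioi (0:ℝ)) (fun x : ℝ => x ^ (-p)) := by
  refine ⟨convex_Ioi 0, fun x hx y hy a b ha hb hab => ?_⟩
  have hx0 : (0:ℝ) < x := hx
  have hy0 : (0:ℝ) < y := hy
  have hxy : (0:ℝ) < a • x + b • y := (convex_Ioi (0:ℝ)) hx hy ha hb hab
  have hlog : a • Real.log x + b • Real.log y ≤ Real.log (a • x + b • y) :=
    strictConcaveOn_log_Ioi.concaveOn.2 hx hy ha hb hab
  have h1 : (a • x + b • y) ^ (-p) = Real.exp (-p * Real.log (a • x + b • y)) := by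
    rw [Real.rpow_def_of_pos hxy, mul_comm]
  simp only []
  rw [h1]
  have h2 : -p * Real.log (a • x + b • y) ≤ a • (-p * Real.log x) + b • (-p * Real.log y) := by
    simp only [smul_eq_mul] at *
    nlinarith [hlog]
  calc Real.exp (-p * Real.log (a • x + b • y))
      ≤ Real.exp (a • (-p * Real.log x) + b • (-p * Real.log y)) := Real.exp_le_exp.2 h2
    _ ≤ a • Real.exp (-p * Real.log x) + b • Real.exp (-p * Real.log y) :=
        convexOn_exp.2 (Set.mem_univ _) (Set.mem_univ _) ha hb hab
    _ = a • x ^ (-p) + b • y ^ (-p) := by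
        rw [Real.rpow_def_of_pos hx0, Real.rpow_def_of_pos hy0, mul_comm (Real.log x),
          mul_comm (Real.log y)]


lemma peierls {n : ℕ} {p : ℝ} (hp : 0 < p) (Q : Matrix (Fin n) (Fin n) ℝ)
    (hQ1 : Qᴴ * Q = 1) (hQ2 : Q * Qᴴ = 1) (μ : Fin n → ℝ) (hμ : ∀ j, 0 < μ j) :
    ∑ i, ((Qᴴ * Matrix.diagonal μ * Q) i i) ^ (-p) ≤ ∑ j, (μ j) ^ (-p) := by
  have hentry : ∀ i, (Qᴴ * Matrix.diagonal μ * Q) i i = ∑ j, (Q j i) ^ 2 * μ j := by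
    intro i
    rw [Matrix.mul_apply]
    simp only [Matrix.mul_diagonal, Matrix.conjTranspose_apply, star_trivial]
    congr 1; funext j; ring
  have hrow : ∀ i, ∑ j, (Q j i) ^ 2 = 1 := by
    intro i
    have : (Qᴴ * Q) i i = 1 := by rw [hQ1]; simp
    rw [Matrix.mul_apply] at this
    simp only [Matrix.conjTranspose_apply, star_trivial] at this
    rw [← this]; congr 1; funext j; ring
  have hcol : ∀ j, ∑ i, (Q j i) ^ 2 = 1 := by
    intro j
    have : (Q * Qᴴ) j j = 1 := by rw [hQ2]; simp
    rw [Matrix.mul_apply] at this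
    simp only [Matrix.conjTranspose_apply, star_trivial] at this
    rw [← this]; congr 1; funext i; ring
  have hjensen : ∀ i, ((Qᴴ * Matrix.diagonal μ * Q) i i) ^ (-p)
      ≤ ∑ j, (Q j i) ^ 2 * (μ j) ^ (-p) := by
    intro i
    have := (convexOn_rpow_neg hp).map_sum_le (t := Finset.univ)
      (w := fun j => (Q j i) ^ 2) (p := μ)
      (fun j _ => sq_nonneg _) (hrow i) (fun j _ => hμ j)
    simp only [smul_eq_mul] at this
    rw [hentry i]
    exact this
  calc ∑ i, ((Qᴴ * Matrix.diagonal μ * Q) i i) ^ (-p)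
      ≤ ∑ i, ∑ j, (Q j i) ^ 2 * (μ j) ^ (-p) := Finset.sum_le_sum fun i _ => hjensen i
    _ = ∑ j, (∑ i, (Q j i) ^ 2) * (μ j) ^ (-p) := by
        rw [Finset.sum_comm]
        simp [Finset.sum_mul]
    _ = ∑ j, (μ j) ^ (-p) := by
        refine Finset.sum_congr rfl fun j _ => ?_
        rw [hcol j, one_mul]

lemma trace_matRpow {n : ℕ} {M : Matrix (Fin n) (Fin n) ℝ} (h : M.IsHermitian) (r : ℝ) :
    (matRpow M r).trace = ∑ i, h.eigenvalues i ^ r := by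
  rw [matRpow, dif_pos h, Matrix.trace_mul_cycle,
    Matrix.mem_unitaryGroup_iff'.mp h.eigenvectorUnitary.2, one_mul, Matrix.trace_diagonal]

lemma diag_nonneg_of_psd {n : ℕ} {A : Matrix (Fin n) (Fin n) ℝ} (hA : A.PosSemidef)
    (i : Fin n) : 0 ≤ A i i := by
  simpa [dotProduct, Matrix.mulVec, Pi.single_apply, Finset.sum_ite_eq] using
    hA.dotProduct_mulVec_nonneg (Pi.single i 1)

lemma trace_pos_of_psd_ne {n : ℕ} {D : Matrix (Fin n) (Fin n) ℝ} (hD : D.PosSemidef)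
    (h0 : D ≠ 0) : 0 < D.trace := by
  have hH := hD.1
  have htr : D.trace = ∑ i, hH.eigenvalues i := by
    conv_lhs => rw [hH.spectral_theorem, Unitary.conjStarAlgAut_apply]
    rw [Matrix.trace_mul_cycle,
      Matrix.mem_unitaryGroup_iff'.mp hH.eigenvectorUnitary.2, one_mul, Matrix.trace_diagonal]
    simp [RCLike.ofReal_real_eq_id]
  have hnn : ∀ i, 0 ≤ hH.eigenvalues i := fun i => hD.eigenvalues_nonneg i
  have hex : ∃ i, hH.eigenvalues i ≠ 0 := by
    by_contra hall
    push_neg at hall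
    apply h0
    have : Matrix.diagonal (RCLike.ofReal ∘ hH.eigenvalues) = (0 : Matrix (Fin n) (Fin n) ℝ) := by
      ext i j
      by_cases hij : i = j <;> simp [Matrix.diagonal, hij, hall]
    rw [hH.spectral_theorem, this, Unitary.conjStarAlgAut_apply, mul_zero, zero_mul]
  obtain ⟨i₀, hi₀⟩ := hex
  rw [htr]
  exact Finset.sum_pos' (fun i _ => hnn i) ⟨i₀, Finset.mem_univ _, (hnn i₀).lt_of_ne' hi₀⟩

lemma conj_diag_pos {n : ℕ} {M U : Matrix (Fin n) (Fin n) ℝ} (hM : M.PosDef)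
    (hU1 : Uᴴ * U = 1) (i : Fin n) : 0 < (Uᴴ * M * U) i i := by
  set u : Fin n → ℝ := fun k => U k i with hu
  have hentry : (Uᴴ * M * U) i i = dotProduct (star u) (M *ᵥ u) := by
    rw [Matrix.mul_apply]
    simp only [Matrix.mul_apply, Matrix.conjTranspose_apply, star_trivial,
      dotProduct, Matrix.mulVec, hu]
    simp_rw [Finset.sum_mul, Finset.mul_sum]
    rw [Finset.sum_comm]
    exact Finset.sum_congr rfl fun k _ => Finset.sum_congr rfl fun l _ => by ring
  have hu0 : u ≠ 0 := by
    intro h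
    have h1 : (Uᴴ * U) i i = 1 := by rw [hU1]; simp
    rw [Matrix.mul_apply] at h1
    simp only [Matrix.conjTranspose_apply, star_trivial] at h1
    have : ∀ k, U k i = 0 := fun k => congrFun h k
    simp [this] at h1
  rw [hentry]
  exact hM.dotProduct_mulVec_pos hu0


/-- For p > 0, M ↦ tr(M^{-p}) is strictly antitonic on positive definite
matrices in the Löwner order, hence Φ_p⁺ is strictly isotonic. -/
theorem stmt2 (m : ℕ) (hm : 1 ≤ m) (p : ℝ) (hp : 0 < p)
    (M₁ M₂ : Matrix (Fin m) (Fin m) ℝ) (h₁ : M₁.PosDef) (h₂ : M₂.PosDef)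
    (hle : (M₂ - M₁).PosSemidef) (hne : M₁ ≠ M₂) :
    (matRpow M₂ (-p)).trace < (matRpow M₁ (-p)).trace ∧
    PhiP m p M₁ < PhiP m p M₂ := by
  have h2H : M₂.IsHermitian := h₂.1
  have h1H : M₁.IsHermitian := h₁.1
  set U : Matrix (Fin m) (Fin m) ℝ := (h2H.eigenvectorUnitary : Matrix (Fin m) (Fin m) ℝ)
    with hUdef
  set V : Matrix (Fin m) (Fin m) ℝ := (h1H.eigenvectorUnitary : Matrix (Fin m) (Fin m) ℝ)
    with hVdef
  have hU1 : Uᴴ * U = 1 := by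
    rw [← Matrix.star_eq_conjTranspose]
    exact Matrix.mem_unitaryGroup_iff'.mp h2H.eigenvectorUnitary.2
  have hU2 : U * Uᴴ = 1 := by
    rw [← Matrix.star_eq_conjTranspose]
    exact Matrix.mem_unitaryGroup_iff.mp h2H.eigenvectorUnitary.2
  have hV1 : Vᴴ * V = 1 := by
    rw [← Matrix.star_eq_conjTranspose]
    exact Matrix.mem_unitaryGroup_iff'.mp h1H.eigenvectorUnitary.2
  have hV2 : V * Vᴴ = 1 := by
    rw [← Matrix.star_eq_conjTranspose]
    exact Matrix.mem_unitaryGroup_iff.mp h1H.eigenvectorUnitary.2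
  set μ₂ : Fin m → ℝ := h2H.eigenvalues with hμ₂def
  set μ₁ : Fin m → ℝ := h1H.eigenvalues with hμ₁def
  have hdiag2 : Uᴴ * M₂ * U = Matrix.diagonal μ₂ := by
    have := h2H.conjStarAlgAut_star_eigenvectorUnitary
    rw [Unitary.conjStarAlgAut_apply, Unitary.coe_star, star_star, Matrix.star_eq_conjTranspose] at this
    simpa [RCLike.ofReal_real_eq_id] using this
  have hsp1 : M₁ = V * Matrix.diagonal μ₁ * Vᴴ := by
    have := h1H.spectral_theorem
    rw [Unitary.conjStarAlgAut_apply, Matrix.star_eq_conjTranspose] at this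
    simpa [RCLike.ofReal_real_eq_id] using this
  set c : Fin m → ℝ := fun i => (Uᴴ * M₁ * U) i i with hc
  have hμ₂pos : ∀ i, 0 < μ₂ i := fun i => h₂.eigenvalues_pos i
  have hμ₁pos : ∀ i, 0 < μ₁ i := fun i => h₁.eigenvalues_pos i
  have hcpos : ∀ i, 0 < c i := fun i => conj_diag_pos h₁ hU1 i
  have hpsd : (Uᴴ * (M₂ - M₁) * U).PosSemidef := hle.conjTranspose_mul_mul_same U
  have hsplit : Uᴴ * (M₂ - M₁) * U = Matrix.diagonal μ₂ - Uᴴ * M₁ * U := by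
    rw [← hdiag2]; noncomm_ring
  have hcle : ∀ i, c i ≤ μ₂ i := by
    intro i
    have h0 : 0 ≤ (Uᴴ * (M₂ - M₁) * U) i i := diag_nonneg_of_psd hpsd i
    rw [hsplit] at h0
    simpa [Matrix.sub_apply, Matrix.diagonal_apply_eq, sub_nonneg, hc] using h0
  have htrD : 0 < (M₂ - M₁).trace :=
    trace_pos_of_psd_ne hle (sub_ne_zero.mpr (Ne.symm hne))
  have htr2 : (Uᴴ * (M₂ - M₁) * U).trace = (M₂ - M₁).trace := by
    rw [Matrix.trace_mul_cycle, hU2, one_mul]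
  have hsum : ∑ i, (μ₂ i - c i) = (M₂ - M₁).trace := by
    rw [← htr2, hsplit, Matrix.trace_sub, Matrix.trace_diagonal, Finset.sum_sub_distrib]
    rfl
  have hex : ∃ i, c i < μ₂ i := by
    by_contra h
    push_neg at h
    have hle0 : ∑ i, (μ₂ i - c i) ≤ 0 :=
      Finset.sum_nonpos fun i _ => by linarith [h i]
    rw [hsum] at hle0; linarith
  have ht2 : (matRpow M₂ (-p)).trace = ∑ i, μ₂ i ^ (-p) := trace_matRpow h2H _
  have ht1 : (matRpow M₁ (-p)).trace = ∑ i, μ₁ i ^ (-p) := trace_matRpow h1H _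
  have hstep1 : ∑ i, μ₂ i ^ (-p) < ∑ i, c i ^ (-p) := by
    obtain ⟨i₀, hi₀⟩ := hex
    refine Finset.sum_lt_sum
      (fun i _ => Real.rpow_le_rpow_of_nonpos (hcpos i) (hcle i) (by linarith))
      ⟨i₀, Finset.mem_univ _, Real.rpow_lt_rpow_of_neg (hcpos i₀) hi₀ (by linarith)⟩
  have hstep2 : ∑ i, c i ^ (-p) ≤ ∑ j, μ₁ j ^ (-p) := by
    have hQ1 : (Vᴴ * U)ᴴ * (Vᴴ * U) = 1 := by
      rw [Matrix.conjTranspose_mul, Matrix.conjTranspose_conjTranspose]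
      calc Uᴴ * V * (Vᴴ * U) = Uᴴ * (V * Vᴴ) * U := by noncomm_ring
        _ = 1 := by rw [hV2, mul_one, hU1]
    have hQ2 : (Vᴴ * U) * (Vᴴ * U)ᴴ = 1 := by
      rw [Matrix.conjTranspose_mul, Matrix.conjTranspose_conjTranspose]
      calc Vᴴ * U * (Uᴴ * V) = Vᴴ * (U * Uᴴ) * V := by noncomm_ring
        _ = 1 := by rw [hU2, mul_one, hV1]
    have hQconj : (Vᴴ * U)ᴴ * Matrix.diagonal μ₁ * (Vᴴ * U) = Uᴴ * M₁ * U := by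
      rw [Matrix.conjTranspose_mul, Matrix.conjTranspose_conjTranspose, hsp1]
      noncomm_ring
    have := peierls hp (Vᴴ * U) hQ1 hQ2 μ₁ hμ₁pos
    rwa [hQconj] at this
  have tracelt : (matRpow M₂ (-p)).trace < (matRpow M₁ (-p)).trace := by
    rw [ht2, ht1]; exact hstep1.trans_le hstep2
  refine ⟨tracelt, ?_⟩
  have hNon : Nonempty (Fin m) := Fin.pos_iff_nonempty.mp hm
  have hmpos : (0:ℝ) < (m:ℝ) := by exact_mod_cast Nat.lt_of_lt_of_le Nat.zero_lt_one hm
  have ht2pos : 0 < (matRpow M₂ (-p)).trace := by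
    rw [ht2]
    exact Finset.sum_pos (fun i _ => Real.rpow_pos_of_pos (hμ₂pos i) _) Finset.univ_nonempty
  have hcoef : (0:ℝ) < 1 / (m:ℝ) := by positivity
  unfold PhiP
  apply Real.rpow_lt_rpow_of_neg
  · exact mul_pos hcoef ht2pos
  · exact mul_lt_mul_of_pos_left tracelt hcoef
  · rw [neg_div]
    exact neg_neg_of_pos (by positivity)
end

section
/- Fix p > -1, α ∈ (0,1), β ≥ 0, and γ* > 0 with (α/γ*)^{1/(p+1)} < (1/γ*)^{1/(p+1)} ≤ (1+β)/α. Consider the system α·ω₁ + (1-α)·ω₂ = 1+β and α/ω₁^{p+1} + (1-α)/ω₂^{p+1} = γ* with constraint 0 < ω₁ ≤ ω₂. If additionally (1+β)·γ*^{1/(p+1)} ≥ 1 (which holds when γ* ∈ [(1+β)^{-p}, 1] for p ≥ 0 or γ* ∈ [1, (1+β)^{-p}] for p ≤ 0), then this system has a unique solution (ω₁, ω₂), and ω₁ lies in the half-open interval ((α/γ*)^{1/(p+1)}, (1/γ*)^{1/(p+1)}]. -/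
open Real

/-- Unique solvability of the two-equation system, with ω₁ in the stated
half-open interval. -/
theorem stmt7 (p α β γ : ℝ) (hp : -1 < p) (hα : α ∈ Set.Ioo (0:ℝ) 1)
    (hβ : 0 ≤ β) (hγpos : 0 < γ)
    (hint₁ : (α / γ) ^ (1 / (p + 1)) < (1 / γ) ^ (1 / (p + 1)))
    (hint₂ : (1 / γ) ^ (1 / (p + 1)) ≤ (1 + β) / α)
    (hsolv : 1 ≤ (1 + β) * γ ^ (1 / (p + 1))) :
    ∃ w : ℝ × ℝ,
      (0 < w.1 ∧ w.1 ≤ w.2 ∧ α * w.1 + (1 - α) * w.2 = 1 + β ∧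
        α / w.1 ^ (p + 1) + (1 - α) / w.2 ^ (p + 1) = γ) ∧
      w.1 ∈ Set.Ioc ((α / γ) ^ (1 / (p + 1))) ((1 / γ) ^ (1 / (p + 1))) ∧
      ∀ w' : ℝ × ℝ,
        (0 < w'.1 ∧ w'.1 ≤ w'.2 ∧ α * w'.1 + (1 - α) * w'.2 = 1 + β ∧
          α / w'.1 ^ (p + 1) + (1 - α) / w'.2 ^ (p + 1) = γ) → w' = w := by
  obtain ⟨hα0, hα1⟩ := hα
  have h1α : (0:ℝ) < 1 - α := by linarith
  set q := p + 1 with hq_def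
  have hq : 0 < q := by simp only [hq_def]; linarith
  set a := (α / γ) ^ (1 / q) with ha_def
  set b := (1 / γ) ^ (1 / q) with hb_def
  have hαγ : (0:ℝ) < α / γ := by positivity
  have ha0 : 0 < a := Real.rpow_pos_of_pos hαγ _
  have hb0 : 0 < b := Real.rpow_pos_of_pos (by positivity) _
  have hab : a < b := hint₁
  have haq : a ^ q = α / γ := by
    rw [ha_def, ← Real.rpow_mul hαγ.le, one_div_mul_cancel hq.ne', Real.rpow_one]
  have hbq : b ^ q = 1 / γ := by
    rw [hb_def, ← Real.rpow_mul (by positivity), one_div_mul_cancel hq.ne', Real.rpow_one]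
  -- b ≤ 1 + β
  have hγq : 0 < γ ^ (1 / q) := Real.rpow_pos_of_pos hγpos _
  have hbβ : b ≤ 1 + β := by
    have : b = 1 / γ ^ (1 / q) := by
      rw [hb_def, Real.div_rpow zero_le_one hγpos.le, Real.one_rpow]
    rw [this, div_le_iff₀ hγq]
    linarith [hsolv]
  -- the linear map
  set W : ℝ → ℝ := fun x => (1 + β - α * x) / (1 - α) with hW_def
  have hW_le : ∀ x, x ≤ 1 + β → x ≤ W x := by
    intro x hx
    rw [hW_def, le_div_iff₀ h1α]
    nlinarith
  have hW_lt : ∀ x, x < 1 + β → x < W x := by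
    intro x hx
    rw [hW_def, lt_div_iff₀ h1α]
    nlinarith
  set f : ℝ → ℝ := fun x => α * x ^ (-q) + (1 - α) * (W x) ^ (-q) with hf_def
  have hfval : ∀ x, 0 < x → 0 < W x → f x = α / x ^ q + (1 - α) / (W x) ^ q := by
    intro x hx hWx
    rw [hf_def]
    simp only [Real.rpow_neg hx.le, Real.rpow_neg hWx.le]
    ring
  -- continuity
  have hWcont : Continuous W := by rw [hW_def]; fun_prop
  have hcont : ContinuousOn f (Set.Icc a b) := by
    intro x hx
    have hx0 : 0 < x := lt_of_lt_of_le ha0 hx.1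
    have hWx : 0 < W x := lt_of_lt_of_le hx0 (hW_le x (hx.2.trans hbβ))
    apply ContinuousAt.continuousWithinAt
    apply ContinuousAt.add
    · exact continuousAt_const.mul (Real.continuousAt_rpow_const x (-q) (Or.inl hx0.ne'))
    · exact continuousAt_const.mul
        ((Real.continuousAt_rpow_const _ (-q) (Or.inl hWx.ne')).comp hWcont.continuousAt)
  -- strict antitonicity
  have hanti : StrictAntiOn f (Set.Icc a b) := by
    apply strictAntiOn_of_deriv_neg (convex_Icc a b) hcont
    rw [interior_Icc]
    intro x hx
    have hx0 : 0 < x := ha0.trans hx.1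
    have hxβ : x < 1 + β := lt_of_lt_of_le hx.2 hbβ
    have hxW : x < W x := hW_lt x hxβ
    have hW0 : 0 < W x := hx0.trans hxW
    have hdW : HasDerivAt W (-α / (1 - α)) x := by
      have h1 : HasDerivAt (fun y : ℝ => 1 + β - α * y) (-α) x := by
        simpa using ((hasDerivAt_id x).const_mul α).const_sub (1 + β)
      simpa [hW_def] using h1.div_const (1 - α)
    have hd1 : HasDerivAt (fun y : ℝ => y ^ (-q)) (-q * x ^ (-q - 1)) x :=
      Real.hasDerivAt_rpow_const (Or.inl hx0.ne')
    have hd2 : HasDerivAt (fun y => (W y) ^ (-q))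
        ((-q * (W x) ^ (-q - 1)) * (-α / (1 - α))) x :=
      (Real.hasDerivAt_rpow_const (Or.inl hW0.ne')).comp x hdW
    have hf' : HasDerivAt f
        (α * (-q * x ^ (-q - 1)) + (1 - α) * ((-q * (W x) ^ (-q - 1)) * (-α / (1 - α)))) x :=
      (hd1.const_mul α).add (hd2.const_mul (1 - α))
    rw [hf'.deriv]
    have hlt : (W x) ^ (-q - 1) < x ^ (-q - 1) :=
      Real.rpow_lt_rpow_of_neg hx0 hxW (by linarith)
    have heq : (1 - α) * ((-q * (W x) ^ (-q - 1)) * (-α / (1 - α)))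
        = α * q * (W x) ^ (-q - 1) := by
      field_simp
    rw [heq]
    nlinarith [mul_pos (mul_pos hα0 hq) (sub_pos.mpr hlt)]
  -- values at endpoints
  have hWa0 : 0 < W a := lt_of_lt_of_le ha0 (hW_le a (hab.le.trans hbβ))
  have hWb0 : 0 < W b := lt_of_lt_of_le hb0 (hW_le b hbβ)
  have hfa : γ < f a := by
    rw [hfval a ha0 hWa0, haq]
    have h2 : 0 < (1 - α) / (W a) ^ q := by positivity
    have : α / (α / γ) = γ := by field_simp
    rw [this]
    linarith
  have hfb : f b ≤ γ := by
    rw [hfval b hb0 hWb0, hbq]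
    have h1 : α / (1 / γ) = α * γ := by field_simp
    rw [h1]
    have hWbge : b ^ q ≤ (W b) ^ q := Real.rpow_le_rpow hb0.le (hW_le b hbβ) hq.le
    have h2 : (1 - α) / (W b) ^ q ≤ (1 - α) / b ^ q := by
      apply div_le_div_of_nonneg_left h1α.le (by positivity) hWbge
    rw [hbq] at h2
    have : (1 - α) / (1 / γ) = (1 - α) * γ := by field_simp
    rw [this] at h2
    nlinarith
  -- IVT
  obtain ⟨x₀, hx₀mem, hfx₀⟩ := intermediate_value_Icc' hab.le hcont ⟨hfb, hfa.le⟩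
  have hx₀a : a < x₀ := by
    rcases eq_or_lt_of_le hx₀mem.1 with h | h
    · exfalso; rw [← h] at hfx₀; linarith
    · exact h
  have hx₀0 : 0 < x₀ := ha0.trans hx₀a
  have hx₀β : x₀ ≤ 1 + β := hx₀mem.2.trans hbβ
  have hWx₀ : 0 < W x₀ := lt_of_lt_of_le hx₀0 (hW_le x₀ hx₀β)
  -- the general membership lemma: any solution has first coord in Ioc a b and second = W
  have hsol_shape : ∀ w' : ℝ × ℝ,
      (0 < w'.1 ∧ w'.1 ≤ w'.2 ∧ α * w'.1 + (1 - α) * w'.2 = 1 + β ∧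
        α / w'.1 ^ q + (1 - α) / w'.2 ^ q = γ) →
      w'.2 = W w'.1 ∧ w'.1 ∈ Set.Ioc a b := by
    rintro ⟨w₁, w₂⟩ ⟨h1, h2, h3, h4⟩
    simp only at h1 h2 h3 h4 ⊢
    have hw₂0 : 0 < w₂ := lt_of_lt_of_le h1 h2
    have hW2 : w₂ = W w₁ := by
      rw [hW_def]
      field_simp
      linarith
    have hw₁q : 0 < w₁ ^ q := Real.rpow_pos_of_pos h1 _
    have hw₂q : 0 < w₂ ^ q := Real.rpow_pos_of_pos hw₂0 _
    have hlo : α / γ < w₁ ^ q := by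
      have : α / w₁ ^ q < γ := by
        have : 0 < (1 - α) / w₂ ^ q := by positivity
        linarith
      rw [div_lt_iff₀ hw₁q] at this
      rw [div_lt_iff₀ hγpos]
      linarith [this]
    have hhi : w₁ ^ q ≤ 1 / γ := by
      have hle : w₁ ^ q ≤ w₂ ^ q := Real.rpow_le_rpow h1.le h2 hq.le
      have h5 : (1 - α) / w₂ ^ q ≤ (1 - α) / w₁ ^ q :=
        div_le_div_of_nonneg_left h1α.le hw₁q hle
      have h6 : γ ≤ 1 / w₁ ^ q := by
        have : α / w₁ ^ q + (1 - α) / w₁ ^ q = 1 / w₁ ^ q := by field_simp; ring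
        linarith
      rw [le_div_iff₀ hw₁q] at h6
      rw [le_div_iff₀ hγpos]
      linarith
    constructor
    · exact hW2
    constructor
    · calc a = (α / γ) ^ (1 / q) := ha_def
        _ < (w₁ ^ q) ^ (1 / q) := Real.rpow_lt_rpow hαγ.le hlo (by positivity)
        _ = w₁ := by
            rw [← Real.rpow_mul h1.le, mul_one_div_cancel hq.ne', Real.rpow_one]
    · calc w₁ = (w₁ ^ q) ^ (1 / q) := by
            rw [← Real.rpow_mul h1.le, mul_one_div_cancel hq.ne', Real.rpow_one]
        _ ≤ (1 / γ) ^ (1 / q) := Real.rpow_le_rpow (by positivity) hhi (by positivity)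
        _ = b := hb_def.symm
  refine ⟨(x₀, W x₀), ⟨hx₀0, hW_le x₀ hx₀β, ?_, ?_⟩, ⟨hx₀a, hx₀mem.2⟩, ?_⟩
  · simp only [hW_def]
    field_simp
    ring
  · rw [← hfval x₀ hx₀0 hWx₀]
    exact hfx₀
  · rintro ⟨w₁, w₂⟩ hw'
    obtain ⟨hW2, hmem⟩ := hsol_shape (w₁, w₂) hw'
    simp only at hW2 hmem
    have hw₁0 : 0 < w₁ := ha0.trans hmem.1
    have hWw₁ : 0 < W w₁ := by rw [← hW2]; exact lt_of_lt_of_le hw₁0 hw'.2.1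
    have hfw₁ : f w₁ = γ := by
      rw [hfval w₁ hw₁0 hWw₁, ← hW2]
      exact hw'.2.2.2
    have : w₁ = x₀ := hanti.injOn (Set.mem_Icc_of_Ioc hmem)
      (Set.mem_Icc_of_Ioc ⟨hx₀a, hx₀mem.2⟩) (by rw [hfw₁, hfx₀])
    subst this
    exact Prod.ext rfl hW2
end

section
/- Fix p > -1, α ∈ (0,1), β ≥ 0 and γ with γ ∈ [(1+β)^{-p},1] if p ≥ 0 (resp. γ ∈ [1,(1+β)^{-p}] if p ≤ 0). Define F(θ) = α/θ^{p+1} + (1-α)^{p+2}/((1+β-αθ)^{p+1}) - γ for θ ∈ ((α/γ)^{1/(p+1)}, (1/γ)^{1/(p+1)}]. Then F has exactly one root in this interval. -/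
open Real

set_option maxHeartbeats 1000000

/-- The function F(θ) = α/θ^{p+1} + (1-α)^{p+2}/(1+β-αθ)^{p+1} - γ has exactly
one root in the interval ((α/γ)^{1/(p+1)}, (1/γ)^{1/(p+1)}]. -/
theorem stmt8 (p α β γ : ℝ) (hp : -1 < p) (hα : α ∈ Set.Ioo (0:ℝ) 1)
    (hβ : 0 ≤ β) (hγpos : 0 < γ)
    (hγ₁ : 0 ≤ p → γ ∈ Set.Icc ((1 + β) ^ (-p)) 1)
    (hγ₂ : p ≤ 0 → γ ∈ Set.Icc 1 ((1 + β) ^ (-p))) :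
    ∃! θ : ℝ,
      θ ∈ Set.Ioc ((α / γ) ^ (1 / (p + 1))) ((1 / γ) ^ (1 / (p + 1))) ∧
      α / θ ^ (p + 1) + (1 - α) ^ (p + 2) / (1 + β - α * θ) ^ (p + 1) - γ = 0 := by
  obtain ⟨hα0, hα1⟩ := hα
  have hp1 : (0:ℝ) < p + 1 := by linarith
  have hp2 : (0:ℝ) < p + 2 := by linarith
  have h1β : (1:ℝ) ≤ 1 + β := by linarith
  set a : ℝ := (α / γ) ^ (1 / (p + 1)) with ha_def
  set b : ℝ := (1 / γ) ^ (1 / (p + 1)) with hb_def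
  set g : ℝ → ℝ := fun θ => α / θ ^ (p + 1) + (1 - α) ^ (p + 2) / (1 + β - α * θ) ^ (p + 1) - γ
    with hg_def
  have hapos : 0 < a := rpow_pos_of_pos (by positivity) _
  have hbpos : 0 < b := rpow_pos_of_pos (by positivity) _
  have hinv : 1 / (p + 1) * (p + 1) = 1 := by field_simp
  have hae : a ^ (p + 1) = α / γ := by
    rw [ha_def, ← Real.rpow_mul (by positivity), hinv, Real.rpow_one]
  have hbe : b ^ (p + 1) = 1 / γ := by
    rw [hb_def, ← Real.rpow_mul (by positivity), hinv, Real.rpow_one]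
  have hab : a < b := by
    rw [ha_def, hb_def]
    refine Real.rpow_lt_rpow (by positivity) ?_ (by positivity)
    rw [div_lt_div_iff₀ hγpos hγpos]
    nlinarith
  -- γ ≥ (1+β)^(-(p+1))
  have hγlb : (1 + β) ^ (-(p + 1)) ≤ γ := by
    rcases le_or_gt 0 p with hp0 | hp0
    · have h := (hγ₁ hp0).1
      calc (1 + β) ^ (-(p + 1)) ≤ (1 + β) ^ (-p) :=
            Real.rpow_le_rpow_of_exponent_le h1β (by linarith)
        _ ≤ γ := h
    · have h := (hγ₂ hp0.le).1
      calc (1 + β) ^ (-(p + 1)) ≤ (1 + β) ^ (0:ℝ) :=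
            Real.rpow_le_rpow_of_exponent_le h1β (by linarith)
        _ = 1 := Real.rpow_zero _
        _ ≤ γ := h
  have hb1β : b ≤ 1 + β := by
    have h1 : 1 / γ ≤ (1 + β) ^ (p + 1) := by
      have hpow : (0:ℝ) < (1 + β) ^ (p + 1) := by positivity
      rw [Real.rpow_neg (by positivity)] at hγlb
      rw [div_le_iff₀ hγpos]
      rw [inv_le_iff_one_le_mul₀ hpow] at hγlb
      linarith [hγlb]
    calc b ≤ ((1 + β) ^ (p + 1)) ^ (1 / (p + 1)) :=
          Real.rpow_le_rpow (by positivity) h1 (by positivity)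
      _ = 1 + β := by
          rw [← Real.rpow_mul (by positivity), mul_one_div, div_self hp1.ne', Real.rpow_one]
  -- positivity on the interval
  have hwpos : ∀ θ ∈ Set.Icc a b, 0 < 1 + β - α * θ := by
    intro θ hθ
    have h1 : α * θ ≤ α * (1 + β) :=
      mul_le_mul_of_nonneg_left (le_trans hθ.2 hb1β) hα0.le
    nlinarith
  have hθpos : ∀ θ ∈ Set.Icc a b, 0 < θ := fun θ hθ => lt_of_lt_of_le hapos hθ.1
  -- continuity
  have hcont : ContinuousOn g (Set.Icc a b) := by
    apply ContinuousOn.sub _ continuousOn_const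
    apply ContinuousOn.add
    · exact ContinuousOn.div continuousOn_const
        (ContinuousOn.rpow_const continuousOn_id (fun x hx => Or.inl (hθpos x hx).ne'))
        (fun x hx => (Real.rpow_pos_of_pos (hθpos x hx) _).ne')
    · exact ContinuousOn.div continuousOn_const
        (ContinuousOn.rpow_const (by fun_prop) (fun x hx => Or.inl (hwpos x hx).ne'))
        (fun x hx => (Real.rpow_pos_of_pos (hwpos x hx) _).ne')
  -- strict antitonicity
  have hanti : StrictAntiOn g (Set.Icc a b) := by
    apply strictAntiOn_of_deriv_neg (convex_Icc a b) hcont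
    intro θ hθ
    rw [interior_Icc] at hθ
    have hθI : θ ∈ Set.Icc a b := Set.mem_Icc_of_Ioo hθ
    have hθ0 : 0 < θ := hθpos θ hθI
    have hw0 : 0 < 1 + β - α * θ := hwpos θ hθI
    have hu : HasDerivAt (fun θ : ℝ => θ ^ (p + 1)) ((p + 1) * θ ^ (p + 1 - 1)) θ :=
      Real.hasDerivAt_rpow_const (Or.inl hθ0.ne')
    have h1 : HasDerivAt (fun θ : ℝ => α / θ ^ (p + 1))
        ((0 * θ ^ (p + 1) - α * ((p + 1) * θ ^ (p + 1 - 1))) / (θ ^ (p + 1)) ^ 2) θ :=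
      (hasDerivAt_const θ α).div hu (Real.rpow_pos_of_pos hθ0 _).ne'
    have hw : HasDerivAt (fun θ : ℝ => 1 + β - α * θ) (0 - α * 1) θ :=
      (hasDerivAt_const θ (1 + β)).sub ((hasDerivAt_id θ).const_mul α)
    have hv : HasDerivAt (fun θ : ℝ => (1 + β - α * θ) ^ (p + 1))
        ((0 - α * 1) * (p + 1) * (1 + β - α * θ) ^ (p + 1 - 1)) θ :=
      hw.rpow_const (Or.inl hw0.ne')
    have h2 : HasDerivAt (fun θ : ℝ => (1 - α) ^ (p + 2) / (1 + β - α * θ) ^ (p + 1))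
        ((0 * (1 + β - α * θ) ^ (p + 1) - (1 - α) ^ (p + 2) *
          ((0 - α * 1) * (p + 1) * (1 + β - α * θ) ^ (p + 1 - 1))) /
          ((1 + β - α * θ) ^ (p + 1)) ^ 2) θ :=
      (hasDerivAt_const θ ((1 - α) ^ (p + 2))).div hv (Real.rpow_pos_of_pos hw0 _).ne'
    have hg' : HasDerivAt g
        ((0 * θ ^ (p + 1) - α * ((p + 1) * θ ^ (p + 1 - 1))) / (θ ^ (p + 1)) ^ 2 +
         ((0 * (1 + β - α * θ) ^ (p + 1) - (1 - α) ^ (p + 2) *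
          ((0 - α * 1) * (p + 1) * (1 + β - α * θ) ^ (p + 1 - 1))) /
          ((1 + β - α * θ) ^ (p + 1)) ^ 2)) θ := by
      simpa [hg_def] using (h1.add h2).sub_const γ
    rw [hg'.deriv, show p + 1 - 1 = p from by ring]
    -- key inequality
    have key : (1 - α) ^ (p + 2) * ((1 + β - α * θ) ^ p / ((1 + β - α * θ) ^ (p + 1)) ^ 2)
        < θ ^ p / (θ ^ (p + 1)) ^ 2 := by
      have e1 : ∀ x : ℝ, 0 < x → x ^ p / (x ^ (p + 1)) ^ 2 = x ^ (-(p + 2)) := by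
        intro x hx
        rw [sq, ← Real.rpow_add hx, ← Real.rpow_sub hx]
        ring_nf
      rw [e1 θ hθ0, e1 _ hw0]
      have base : (1 - α) * θ < 1 + β - α * θ := by
        have : θ < 1 + β := lt_of_lt_of_le hθ.2 hb1β
        nlinarith
      have hlt : ((1 - α) * θ) ^ (p + 2) < (1 + β - α * θ) ^ (p + 2) :=
        Real.rpow_lt_rpow (mul_nonneg (by linarith) hθ0.le) base hp2
      rw [Real.mul_rpow (by linarith) hθ0.le] at hlt
      rw [Real.rpow_neg hw0.le, Real.rpow_neg hθ0.le, ← div_eq_mul_inv, inv_eq_one_div,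
        div_lt_div_iff₀ (by positivity) (by positivity)]
      nlinarith [hlt]
    have hfactor : (0 * θ ^ (p + 1) - α * ((p + 1) * θ ^ p)) / (θ ^ (p + 1)) ^ 2 +
        (0 * (1 + β - α * θ) ^ (p + 1) - (1 - α) ^ (p + 2) *
          ((0 - α * 1) * (p + 1) * (1 + β - α * θ) ^ p)) / ((1 + β - α * θ) ^ (p + 1)) ^ 2
        = (α * (p + 1)) *
          ((1 - α) ^ (p + 2) * ((1 + β - α * θ) ^ p / ((1 + β - α * θ) ^ (p + 1)) ^ 2)
            - θ ^ p / (θ ^ (p + 1)) ^ 2) := by ring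
    rw [hfactor]
    exact mul_neg_of_pos_of_neg (by positivity) (by linarith [key])
  -- boundary values
  have hwa : 0 < 1 + β - α * a := hwpos a ⟨le_refl a, hab.le⟩
  have hwb : 0 < 1 + β - α * b := hwpos b ⟨hab.le, le_refl b⟩
  have hga_pos : 0 < g a := by
    have h1 : α / a ^ (p + 1) = γ := by
      rw [hae]; field_simp
    have h2 : 0 < (1 - α) ^ (p + 2) / (1 + β - α * a) ^ (p + 1) :=
      div_pos (Real.rpow_pos_of_pos (by linarith) _) (Real.rpow_pos_of_pos hwa _)
    simp only [hg_def]
    rw [h1]; linarith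
  have hgb_le : g b ≤ 0 := by
    have h1 : α / b ^ (p + 1) = α * γ := by
      rw [hbe]; field_simp
    have hbb : (1 - α) * b ≤ 1 + β - α * b := by nlinarith
    have hle : ((1 - α) * b) ^ (p + 1) ≤ (1 + β - α * b) ^ (p + 1) :=
      Real.rpow_le_rpow (mul_nonneg (by linarith) hbpos.le) hbb hp1.le
    rw [Real.mul_rpow (by linarith) hbpos.le, hbe] at hle
    -- (1-α)^(p+1) * (1/γ) ≤ (1+β-αb)^(p+1)
    have hC : (1 - α) ^ (p + 2) = (1 - α) ^ (p + 1) * (1 - α) := by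
      rw [show p + 2 = p + 1 + 1 from by ring, Real.rpow_add (by linarith : (0:ℝ) < 1 - α),
        Real.rpow_one]
    have h2 : (1 - α) ^ (p + 2) / (1 + β - α * b) ^ (p + 1) ≤ (1 - α) * γ := by
      rw [hC, div_le_iff₀ (Real.rpow_pos_of_pos hwb _)]
      rw [mul_one_div, div_le_iff₀ hγpos] at hle
      have h3 : (1 - α) ^ (p + 1) ≤ γ * (1 + β - α * b) ^ (p + 1) := by nlinarith [hle]
      nlinarith [mul_le_mul_of_nonneg_left h3 (by linarith : (0:ℝ) ≤ 1 - α)]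
    simp only [hg_def]
    rw [h1]; nlinarith
  -- existence via IVT
  have hmem : (0:ℝ) ∈ Set.Icc (g b) (g a) := ⟨hgb_le, hga_pos.le⟩
  obtain ⟨θ₀, hθ₀I, hθ₀⟩ := intermediate_value_Icc' hab.le hcont hmem
  have hθ₀a : a < θ₀ := by
    rcases lt_or_eq_of_le hθ₀I.1 with h | h
    · exact h
    · exfalso; rw [← h] at hθ₀; rw [hθ₀] at hga_pos; exact lt_irrefl 0 hga_pos
  refine ⟨θ₀, ⟨⟨hθ₀a, hθ₀I.2⟩, hθ₀⟩, ?_⟩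
  rintro y ⟨hyI, hy⟩
  have hyIcc : y ∈ Set.Icc a b := ⟨hyI.1.le, hyI.2⟩
  exact hanti.injOn hyIcc hθ₀I (by rw [show g y = 0 from hy, hθ₀])
end

section
/- Monotonicity of the implicit solution in α: under the conditions of the two-equation system (p > -1, β ≥ 0, admissible γ*), the unique solution ω₁*(α) with ω₁ ≤ ω₂ satisfies ∂ω₁*/∂α = (ω₁*/(α(p+1)(z^{p+2}−1)))·((p+1)(1−z) + z(z^{p+1}−1)) ≥ 0, where z = ω₂*/ω₁* ≥ 1; that is, ω₁* is non-decreasing in α. -/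
open Real

-- key inequality: q(z-1) ≤ z(z^q - 1) for z>1, q>0
lemma keyIneq {q z : ℝ} (hq : 0 < q) (hz : 1 < z) : q * (z - 1) ≤ z * (z ^ q - 1) := by
  have hz0 : (0:ℝ) < z := lt_trans one_pos hz
  have hu : 0 < z ^ q := rpow_pos_of_pos hz0 q
  rcases le_or_gt 1 q with hq1 | hq1
  · have h := one_add_mul_self_le_rpow_one_add (s := z - 1) (by linarith) hq1
    rw [show (1:ℝ) + (z - 1) = z by ring] at h
    nlinarith [mul_le_mul_of_nonneg_left h hz0.le, mul_nonneg (mul_nonneg hq.le (by linarith : (0:ℝ) ≤ z-1)) (by linarith : (0:ℝ) ≤ z-1)]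
  · have h := rpow_one_add_le_one_add_mul_self (s := 1/z - 1) (by
      have : 0 < 1/z := by positivity
      linarith) hq.le hq1.le
    rw [show (1:ℝ) + (1/z - 1) = 1/z by ring, one_div, Real.inv_rpow hz0.le] at h
    have hu1 : 1 ≤ z ^ q := Real.one_le_rpow hz.le hq.le
    have h2 := mul_le_mul_of_nonneg_left h hu.le
    rw [mul_inv_cancel₀ (ne_of_gt hu)] at h2
    have h3 : z ≤ z ^ q * (z + q * (1 - z)) := by
      have h4 := mul_le_mul_of_nonneg_left h2 hz0.le
      calc z = z * 1 := (mul_one z).symm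
        _ ≤ z * (z ^ q * (1 + q * (z⁻¹ - 1))) := h4
        _ = z ^ q * (z + q * (1 - z)) := by field_simp
    nlinarith [mul_nonneg (sub_nonneg.mpr hu1) (by nlinarith : (0:ℝ) ≤ q * (z - 1))]

/-- Monotonicity in α of the solution ω₁* of the two-equation system: its
derivative is given by the stated formula and is nonnegative, so ω₁* is
non-decreasing in α. -/
theorem stmt15 (p β γ : ℝ) (hp : -1 < p) (hβ : 0 ≤ β)
    (hγ₁ : 0 ≤ p → γ ∈ Set.Icc ((1 + β) ^ (-p)) 1)
    (hγ₂ : p ≤ 0 → γ ∈ Set.Icc 1 ((1 + β) ^ (-p)))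
    (w₁ w₂ d₁ : ℝ → ℝ)
    (hsol : ∀ α ∈ Set.Ioo (0:ℝ) 1, 0 < w₁ α ∧ w₁ α ≤ w₂ α ∧
      α * w₁ α + (1 - α) * w₂ α = 1 + β ∧
      α / (w₁ α) ^ (p + 1) + (1 - α) / (w₂ α) ^ (p + 1) = γ)
    (hderiv : ∀ α ∈ Set.Ioo (0:ℝ) 1, HasDerivAt w₁ (d₁ α) α) :
    (∀ α ∈ Set.Ioo (0:ℝ) 1, w₁ α < w₂ α →
      d₁ α = (w₁ α / (α * (p + 1) * ((w₂ α / w₁ α) ^ (p + 2) - 1))) *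
          ((p + 1) * (1 - w₂ α / w₁ α) +
            (w₂ α / w₁ α) * ((w₂ α / w₁ α) ^ (p + 1) - 1)) ∧
      0 ≤ d₁ α) ∧
    MonotoneOn w₁ (Set.Ioo (0:ℝ) 1) := by
  have hq : (0:ℝ) < p + 1 := by linarith
  -- the derivative formula at points where w₁ < w₂
  have hform : ∀ α ∈ Set.Ioo (0:ℝ) 1, w₁ α < w₂ α →
      d₁ α = (w₁ α / (α * (p + 1) * ((w₂ α / w₁ α) ^ (p + 2) - 1))) *
          ((p + 1) * (1 - w₂ α / w₁ α) +
            (w₂ α / w₁ α) * ((w₂ α / w₁ α) ^ (p + 1) - 1)) := by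
    intro α hα hlt
    obtain ⟨hx, hxy, heq1, heq2⟩ := hsol α hα
    obtain ⟨hα0, hα1⟩ := hα
    have hy : 0 < w₂ α := lt_of_lt_of_le hx hxy
    have h1α : (0:ℝ) < 1 - α := by linarith
    have hmem : Set.Ioo (0:ℝ) 1 ∈ nhds α := isOpen_Ioo.mem_nhds ⟨hα0, hα1⟩
    -- derivative of w₂
    have hEw2 : w₂ =ᶠ[nhds α] (fun s => ((1 + β) - s * w₁ s) / (1 - s)) := by
      filter_upwards [hmem] with s hs
      obtain ⟨_, _, he1, _⟩ := hsol s hs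
      rw [eq_div_iff (by have := hs.2; intro h; nlinarith : (1:ℝ) - s ≠ 0)]
      linear_combination he1
    have h1 : HasDerivAt (fun s => (1 + β) - s * w₁ s) (-(1 * w₁ α + α * d₁ α)) α := by
      have := ((hasDerivAt_id α).mul (hderiv α ⟨hα0, hα1⟩))
      simpa using this.const_sub (1 + β)
    have h2 : HasDerivAt (fun s : ℝ => 1 - s) (-1) α := by
      simpa using (hasDerivAt_id α).const_sub (1:ℝ)
    have h3 := h1.div h2 (by linarith : (1:ℝ) - α ≠ 0)
    have h4 : (-(1 * w₁ α + α * d₁ α) * (1 - α) - ((1 + β) - α * w₁ α) * (-1)) / (1 - α) ^ 2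
        = (w₂ α - w₁ α - α * d₁ α) / (1 - α) := by
      rw [div_eq_div_iff (by positivity) h1α.ne']
      linear_combination (α - 1) * heq1
    have hd2 : HasDerivAt w₂ ((w₂ α - w₁ α - α * d₁ α) / (1 - α)) α :=
      hEw2.hasDerivAt_iff.mpr (h4 ▸ h3)
    -- derivative of the second-equation function
    have hG1 : HasDerivAt (fun s => (w₁ s) ^ (-(p+1)))
        (d₁ α * -(p+1) * (w₁ α) ^ (-(p+1) - 1)) α :=
      (hderiv α ⟨hα0, hα1⟩).rpow_const (Or.inl hx.ne')
    have hG2 : HasDerivAt (fun s => (w₂ s) ^ (-(p+1)))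
        ((w₂ α - w₁ α - α * d₁ α) / (1 - α) * -(p+1) * (w₂ α) ^ (-(p+1) - 1)) α :=
      hd2.rpow_const (Or.inl hy.ne')
    have hGa : HasDerivAt (fun s => s * (w₁ s) ^ (-(p+1)))
        (1 * (w₁ α) ^ (-(p+1)) + α * (d₁ α * -(p+1) * (w₁ α) ^ (-(p+1) - 1))) α :=
      (hasDerivAt_id α).mul hG1
    have hGb : HasDerivAt (fun s => (1 - s) * (w₂ s) ^ (-(p+1)))
        ((-1) * (w₂ α) ^ (-(p+1)) + (1 - α) *
          ((w₂ α - w₁ α - α * d₁ α) / (1 - α) * -(p+1) * (w₂ α) ^ (-(p+1) - 1))) α :=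
      h2.mul hG2
    have hG := hGa.add hGb
    have hGc : (fun s => s * (w₁ s) ^ (-(p+1)) + (1 - s) * (w₂ s) ^ (-(p+1)))
        =ᶠ[nhds α] fun _ => γ := by
      filter_upwards [hmem] with s hs
      obtain ⟨hx', hxy', _, he2⟩ := hsol s hs
      have hy' : 0 < w₂ s := lt_of_lt_of_le hx' hxy'
      rw [Real.rpow_neg hx'.le, Real.rpow_neg hy'.le]
      rw [div_eq_mul_inv, div_eq_mul_inv] at he2
      exact he2
    have hzero : (1 * (w₁ α) ^ (-(p+1)) + α * (d₁ α * -(p+1) * (w₁ α) ^ (-(p+1) - 1))) +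
        ((-1) * (w₂ α) ^ (-(p+1)) + (1 - α) *
          ((w₂ α - w₁ α - α * d₁ α) / (1 - α) * -(p+1) * (w₂ α) ^ (-(p+1) - 1))) = 0 :=
      hG.unique (hGc.hasDerivAt_iff.mpr (hasDerivAt_const α γ))
    -- algebra
    have hA : 0 < (w₁ α) ^ (p+1) := rpow_pos_of_pos hx _
    have hB : 0 < (w₂ α) ^ (p+1) := rpow_pos_of_pos hy _
    have e1 : (w₁ α) ^ (-(p+1)) = ((w₁ α) ^ (p+1))⁻¹ := Real.rpow_neg hx.le _
    have e1' : (w₂ α) ^ (-(p+1)) = ((w₂ α) ^ (p+1))⁻¹ := Real.rpow_neg hy.le _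
    have e2 : (w₁ α) ^ (-(p+1) - 1) = ((w₁ α) ^ (p+1) * w₁ α)⁻¹ := by
      rw [show -(p+1) - 1 = -((p+1) + 1) by ring, Real.rpow_neg hx.le,
        Real.rpow_add hx, Real.rpow_one]
    have e2' : (w₂ α) ^ (-(p+1) - 1) = ((w₂ α) ^ (p+1) * w₂ α)⁻¹ := by
      rw [show -(p+1) - 1 = -((p+1) + 1) by ring, Real.rpow_neg hy.le,
        Real.rpow_add hy, Real.rpow_one]
    have e3 : (w₂ α / w₁ α) ^ (p+2) = ((w₂ α) ^ (p+1) * w₂ α) / ((w₁ α) ^ (p+1) * w₁ α) := by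
      rw [Real.div_rpow hy.le hx.le, show (p+2:ℝ) = (p+1) + 1 by ring,
        Real.rpow_add hy, Real.rpow_add hx, Real.rpow_one, Real.rpow_one]
    have e4 : (w₂ α / w₁ α) ^ (p+1) = (w₂ α) ^ (p+1) / (w₁ α) ^ (p+1) :=
      Real.div_rpow hy.le hx.le _
    have hz1 : 1 < w₂ α / w₁ α := (one_lt_div hx).mpr hlt
    have hZ : 1 < (w₂ α / w₁ α) ^ (p+2) :=
      (Real.one_lt_rpow_iff_of_pos (by positivity)).mpr (Or.inl ⟨hz1, by linarith⟩)
    rw [e1, e1', e2, e2'] at hzero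
    rw [e3] at hZ
    have hBA : (w₁ α) ^ (p+1) * w₁ α < (w₂ α) ^ (p+1) * w₂ α := by
      have := (one_lt_div (by positivity : (0:ℝ) < (w₁ α) ^ (p+1) * w₁ α)).mp hZ
      linarith
    have hkey : d₁ α = ((w₂ α)^(p+1) * w₁ α * w₂ α - (w₁ α)^(p+1) * w₁ α * w₂ α
        - (p+1) * (w₂ α - w₁ α) * ((w₁ α)^(p+1) * w₁ α))
        / (α * (p+1) * ((w₂ α)^(p+1) * w₂ α - (w₁ α)^(p+1) * w₁ α)) := by
      field_simp at hzero
      have h6 : (1 - α) * (w₂ α ^ (p+1)) *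
          ((w₂ α)^(p+1) * w₁ α * w₂ α - (w₁ α)^(p+1) * w₁ α * w₂ α
            - (p+1) * (w₂ α - w₁ α) * ((w₁ α)^(p+1) * w₁ α)
            - α * (p+1) * (d₁ α) * ((w₂ α)^(p+1) * w₂ α - (w₁ α)^(p+1) * w₁ α)) = 0 := by
        linear_combination (1 - α) * w₂ α ^ (p+1) * hzero
      have h7 := (mul_eq_zero.mp h6).resolve_left
        (by positivity : ((1 - α) * (w₂ α ^ (p+1)) : ℝ) ≠ 0)
      rw [eq_div_iff (ne_of_gt (mul_pos (mul_pos hα0 hq) (sub_pos.mpr hBA)))]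
      linear_combination -h7
    rw [e3, e4, hkey]
    have hT : ((w₂ α)^(p+1) * w₂ α) / ((w₁ α)^(p+1) * w₁ α) - 1 ≠ 0 := by
      exact sub_ne_zero.mpr ((one_lt_div (by positivity : (0:ℝ) < (w₁ α)^(p+1) * w₁ α)).mpr hBA).ne'
    field_simp [hα0.ne', hq.ne', sub_ne_zero.mpr hBA.ne']
    ring
  -- upper bound w₁ ≤ 1 + β
  have hub : ∀ s ∈ Set.Ioo (0:ℝ) 1, w₁ s ≤ 1 + β := by
    intro s hs
    obtain ⟨hx', hxy', he1, _⟩ := hsol s hs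
    nlinarith [mul_nonneg (by linarith [hs.2] : (0:ℝ) ≤ 1 - s) (sub_nonneg.mpr hxy')]
  -- nonnegativity of the derivative
  have hnn : ∀ α ∈ Set.Ioo (0:ℝ) 1, 0 ≤ d₁ α := by
    intro α hα
    obtain ⟨hx, hxy, heq1, heq2⟩ := hsol α hα
    rcases lt_or_eq_of_le hxy with hlt | heq
    · rw [hform α hα hlt]
      have hy : 0 < w₂ α := lt_of_lt_of_le hx hxy
      have hz1 : 1 < w₂ α / w₁ α := (one_lt_div hx).mpr hlt
      have hZ : 1 < (w₂ α / w₁ α) ^ (p+2) :=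
        (Real.one_lt_rpow_iff_of_pos (by positivity)).mpr (Or.inl ⟨hz1, by linarith⟩)
      have hfac : 0 < w₁ α / (α * (p+1) * ((w₂ α / w₁ α) ^ (p+2) - 1)) := by
        apply div_pos hx
        apply mul_pos (mul_pos hα.1 hq)
        linarith
      apply mul_nonneg hfac.le
      have hk := keyIneq hq hz1
      linarith [hk]
    · have heqmax : w₁ α = 1 + β := by
        linear_combination heq1 + (1 - α) * heq
      have hmax : IsLocalMax w₁ α := by
        filter_upwards [isOpen_Ioo.mem_nhds hα] with s hs
        rw [heqmax]; exact hub s hs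
      rw [hmax.hasDerivAt_eq_zero (hderiv α hα)]
  refine ⟨fun α hα hlt => ⟨hform α hα hlt, hnn α hα⟩, ?_⟩
  apply monotoneOn_of_deriv_nonneg (convex_Ioo 0 1)
  · exact fun s hs => ((hderiv s hs).continuousAt).continuousWithinAt
  · rw [interior_Ioo]
    exact fun s hs => ((hderiv s hs).differentiableAt).differentiableWithinAt
  · intro s hs
    rw [interior_Ioo] at hs
    rw [(hderiv s hs).deriv]
    exact hnn s hs
end

section
/- The inequality tr(M·(M*)^{-(p+1)}) ≤ t* implies λ_min(H)·t* ≥ λ_min(M^{-p}), where H = M^{-(p+1)/2}(M*)^{p+1}M^{-(p+1)/2}: equivalently, writing H = SΛSᵀ and B = SᵀM^{-p}S with diagonal entries b_i and eigenvalues λ₁ ≤ … ≤ λ_m of H, one has Σ_i b_i/λ_i ≤ t* and hence λ₁ ≥ b₁/t* ≥ λ_min(M^{-p})/t*. -/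
open Matrix Real

variable {m : ℕ}

lemma posDef_ctm {B C : Matrix (Fin m) (Fin m) ℝ} (hB : IsUnit B) (hC : C.PosDef) :
    (Bᴴ * C * B).PosDef := by
  have hinj : Function.Injective B.mulVec := Matrix.mulVec_injective_iff_isUnit.2 hB
  exact hC.conjTranspose_mul_mul_same hinj

lemma posDef_conj {B C : Matrix (Fin m) (Fin m) ℝ} (hB : B.PosDef) (hC : C.PosDef) :
    (B * C * B).PosDef := by
  have : B * C * B = Bᴴ * C * B := by rw [hB.1.eq]
  rw [this]
  exact posDef_ctm hB.isUnit hC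

lemma matRpow_posDef {M : Matrix (Fin m) (Fin m) ℝ} (hM : M.PosDef) (r : ℝ) :
    (matRpow M r).PosDef := by
  rw [matRpow, dif_pos hM.isHermitian]
  have hD : (Matrix.diagonal (fun i => hM.isHermitian.eigenvalues i ^ r)).PosDef :=
    Matrix.posDef_diagonal_iff.2 fun i => Real.rpow_pos_of_pos (hM.eigenvalues_pos i) r
  have hU : IsUnit (star (hM.isHermitian.eigenvectorUnitary : Matrix (Fin m) (Fin m) ℝ)) := by
    exact (Unitary.toUnits hM.isHermitian.eigenvectorUnitary)⁻¹.isUnit -- ??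
  have := posDef_ctm hU hD
  simpa [star_eq_conjTranspose] using this

lemma matRpow_mul {M : Matrix (Fin m) (Fin m) ℝ} (hM : M.PosDef) (r s : ℝ) :
    matRpow M r * matRpow M s = matRpow M (r + s) := by
  have h := hM.isHermitian
  rw [matRpow, matRpow, matRpow, dif_pos h, dif_pos h, dif_pos h]
  set U : Matrix (Fin m) (Fin m) ℝ := (h.eigenvectorUnitary : Matrix (Fin m) (Fin m) ℝ)
  have hUU : star U * U = 1 := Unitary.coe_star_mul_self h.eigenvectorUnitary
  have : (U * Matrix.diagonal (fun i => h.eigenvalues i ^ r) * star U) *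
      (U * Matrix.diagonal (fun i => h.eigenvalues i ^ s) * star U) =
      U * (Matrix.diagonal (fun i => h.eigenvalues i ^ r) *
        Matrix.diagonal (fun i => h.eigenvalues i ^ s)) * star U := by
    calc (U * Matrix.diagonal (fun i => h.eigenvalues i ^ r) * star U) *
        (U * Matrix.diagonal (fun i => h.eigenvalues i ^ s) * star U)
        = U * (Matrix.diagonal (fun i => h.eigenvalues i ^ r) * ((star U * U) *
            (Matrix.diagonal (fun i => h.eigenvalues i ^ s) * star U))) := by
          simp only [Matrix.mul_assoc]
      _ = _ := by rw [hUU, one_mul]; simp only [Matrix.mul_assoc]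
  rw [this, Matrix.diagonal_mul_diagonal]
  have : (fun i => h.eigenvalues i ^ r * h.eigenvalues i ^ s)
      = fun i => h.eigenvalues i ^ (r + s) := by
    funext i; exact (Real.rpow_add (hM.eigenvalues_pos i) r s).symm
  rw [this]

lemma matRpow_zero {M : Matrix (Fin m) (Fin m) ℝ} (hM : M.IsHermitian) :
    matRpow M 0 = 1 := by
  rw [matRpow, dif_pos hM]
  simp [Real.rpow_zero, Unitary.coe_mul_star_self]

lemma matRpow_one {M : Matrix (Fin m) (Fin m) ℝ} (hM : M.IsHermitian) :
    matRpow M 1 = M := by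
  rw [matRpow, dif_pos hM]
  simp only [Real.rpow_one]
  conv_rhs => rw [hM.spectral_theorem]
  congr

lemma trace_eq_sum_eig {A : Matrix (Fin m) (Fin m) ℝ} (hA : A.IsHermitian) :
    A.trace = ∑ i, hA.eigenvalues i := by
  conv_lhs => rw [hA.spectral_theorem, Unitary.conjStarAlgAut_apply]
  rw [Matrix.trace_mul_cycle]
  rw [Unitary.coe_star_mul_self hA.eigenvectorUnitary, one_mul, Matrix.trace_diagonal]
  simp

lemma trace_nonneg_of_psd {A : Matrix (Fin m) (Fin m) ℝ} (hA : A.PosSemidef) :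
    0 ≤ A.trace := by
  rw [trace_eq_sum_eig hA.isHermitian]
  exact Finset.sum_nonneg fun i _ => hA.eigenvalues_nonneg i

lemma trace_mul_nonneg {P Q : Matrix (Fin m) (Fin m) ℝ} (hP : P.PosSemidef)
    (hQ : Q.PosSemidef) : 0 ≤ (P * Q).trace := by
  obtain ⟨B, hBB, hBh⟩ : ∃ B : Matrix (Fin m) (Fin m) ℝ, B * B = Q ∧ Bᴴ = B := by
    set U : Matrix (Fin m) (Fin m) ℝ :=
      (hQ.isHermitian.eigenvectorUnitary : Matrix (Fin m) (Fin m) ℝ)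
    have hUU : star U * U = 1 := Unitary.coe_star_mul_self hQ.isHermitian.eigenvectorUnitary
    refine ⟨U * Matrix.diagonal (fun i => Real.sqrt (hQ.isHermitian.eigenvalues i)) * star U,
      ?_, ?_⟩
    · conv_rhs => rw [hQ.isHermitian.spectral_theorem, Unitary.conjStarAlgAut_apply]
      calc _ = U * (Matrix.diagonal (fun i => Real.sqrt (hQ.isHermitian.eigenvalues i)) *
            ((star U * U) * (Matrix.diagonal (fun i => Real.sqrt (hQ.isHermitian.eigenvalues i)) *
              star U))) := by simp only [Matrix.mul_assoc]
        _ = _ := by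
          rw [hUU, one_mul, ← Matrix.mul_assoc (Matrix.diagonal _) (Matrix.diagonal _),
            Matrix.diagonal_mul_diagonal, ← Matrix.mul_assoc]
          rw [show (fun i => Real.sqrt (hQ.isHermitian.eigenvalues i) *
              Real.sqrt (hQ.isHermitian.eigenvalues i)) =
              (RCLike.ofReal ∘ hQ.isHermitian.eigenvalues : Fin m → ℝ) from
            funext fun i => Real.mul_self_sqrt (hQ.eigenvalues_nonneg i)]
    · simp [Matrix.conjTranspose_mul, Matrix.mul_assoc, star_eq_conjTranspose]
  have h1 : P * Q = P * (B * B) := by rw [hBB]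
  rw [h1, ← Matrix.mul_assoc, Matrix.trace_mul_cycle]
  have h2 : B * P * B = (B)ᴴ * P * B := by
    rw [hBh]
  rw [h2]
  exact trace_nonneg_of_psd (hP.conjTranspose_mul_mul_same B)

lemma sub_smul_one_psd {A : Matrix (Fin m) (Fin m) ℝ} (hA : A.IsHermitian) {c : ℝ}
    (hc : ∀ i, c ≤ hA.eigenvalues i) : (A - c • 1).PosSemidef := by
  set U : Matrix (Fin m) (Fin m) ℝ := (hA.eigenvectorUnitary : Matrix (Fin m) (Fin m) ℝ)
  have hU : U * star U = 1 := (Matrix.mem_unitaryGroup_iff).mp hA.eigenvectorUnitary.2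
  have key : A - c • 1 = U * Matrix.diagonal (fun i => hA.eigenvalues i - c) * star U := by
    conv_lhs => rw [hA.spectral_theorem, Unitary.conjStarAlgAut_apply]
    have : (c • (1 : Matrix (Fin m) (Fin m) ℝ)) = U * (c • 1) * star U := by
      rw [Matrix.mul_smul, Matrix.smul_mul, mul_one, hU]
    rw [this, ← Matrix.sub_mul, ← Matrix.mul_sub]
    congr 1
    congr 1
    rw [Matrix.smul_one_eq_diagonal, Matrix.diagonal_sub]
    congr 1
  rw [key]
  have hD : (Matrix.diagonal (fun i => hA.eigenvalues i - c)).PosSemidef :=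
    Matrix.posSemidef_diagonal_iff.2 fun i => sub_nonneg.2 (hc i)
  simpa [star_eq_conjTranspose] using hD.mul_mul_conjTranspose_same U

lemma sInf_spectrum_facts (hm : 1 ≤ m) {A : Matrix (Fin m) (Fin m) ℝ} (hA : A.IsHermitian) :
    (∃ i, sInf (spectrum ℝ A) = hA.eigenvalues i) ∧
      ∀ j, sInf (spectrum ℝ A) ≤ hA.eigenvalues j := by
  have : Nonempty (Fin m) := ⟨⟨0, hm⟩⟩
  have hrange : spectrum ℝ A = Set.range hA.eigenvalues := hA.spectrum_real_eq_range_eigenvalues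
  rw [hrange]
  have hne : (Set.range hA.eigenvalues).Nonempty := Set.range_nonempty _
  have hfin : (Set.range hA.eigenvalues).Finite := Set.finite_range _
  constructor
  · obtain ⟨i, hi⟩ := hne.csInf_mem hfin
    exact ⟨i, hi.symm⟩
  · exact fun j => csInf_le hfin.bddBelow ⟨j, rfl⟩


set_option maxHeartbeats 1000000 in
/-- tr(M·(M*)^{-(p+1)}) ≤ t* implies λ_min(H)·t* ≥ λ_min(M^{-p}) where
H = M^{-(p+1)/2}(M*)^{p+1}M^{-(p+1)/2} and t* = tr((M*)^{-p}). -/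
theorem stmt17 (m : ℕ) (hm : 1 ≤ m) (p : ℝ) (hp : -1 < p)
    (M Mstar : Matrix (Fin m) (Fin m) ℝ) (hM : M.PosDef) (hMs : Mstar.PosDef)
    (hopt : (M * matRpow Mstar (-(p + 1))).trace ≤ (matRpow Mstar (-p)).trace) :
    sInf (spectrum ℝ (matRpow M (-p))) ≤
      sInf (spectrum ℝ
          (matRpow M (-((p + 1) / 2)) * matRpow Mstar (p + 1) *
            matRpow M (-((p + 1) / 2)))) *
        (matRpow Mstar (-p)).trace := by
  set P := matRpow M ((p + 1) / 2) with hPdef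
  set Q := matRpow M (-((p + 1) / 2)) with hQdef
  set R := matRpow Mstar (-(p + 1)) with hRdef
  set S := matRpow Mstar (p + 1) with hSdef
  set A := matRpow M (-p) with hAdef
  set t := (matRpow Mstar (-p)).trace with htdef
  set H := Q * S * Q with hHdef
  set G := P * R * P with hGdef
  have hA : A.PosDef := matRpow_posDef hM _
  have hP : P.PosDef := matRpow_posDef hM _
  have hQ : Q.PosDef := matRpow_posDef hM _
  have hR : R.PosDef := matRpow_posDef hMs _
  have hS : S.PosDef := matRpow_posDef hMs _
  have hH : H.PosDef := posDef_conj hQ hS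
  have hG : G.PosDef := posDef_conj hP hR
  have hPQ : P * Q = 1 := by
    rw [hPdef, hQdef, matRpow_mul hM]
    rw [show (p + 1) / 2 + -((p + 1) / 2) = 0 by ring, matRpow_zero hM.isHermitian]
  have hQP : Q * P = 1 := by
    rw [hPdef, hQdef, matRpow_mul hM]
    rw [show -((p + 1) / 2) + (p + 1) / 2 = 0 by ring, matRpow_zero hM.isHermitian]
  have hRS : R * S = 1 := by
    rw [hRdef, hSdef, matRpow_mul hMs]
    rw [show -(p + 1) + (p + 1) = 0 by ring, matRpow_zero hMs.isHermitian]
  have hGH : G * H = 1 := by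
    calc P * R * P * (Q * S * Q)
        = P * (R * ((P * Q) * (S * Q))) := by simp only [Matrix.mul_assoc]
      _ = P * (R * S * Q) := by rw [hPQ, one_mul, Matrix.mul_assoc]
      _ = P * Q := by rw [hRS, one_mul]
      _ = 1 := hPQ
  have hHG : H * G = 1 := mul_eq_one_comm.mp hGH
  -- trace identity
  have hPAP : P * A * P = M := by
    rw [hPdef, hAdef, matRpow_mul hM, matRpow_mul hM]
    rw [show (p + 1) / 2 + -p + (p + 1) / 2 = 1 by ring, matRpow_one hM.isHermitian]
  have htrGA : (G * A).trace = (M * R).trace := by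
    have e1 : G * A = (P * R) * (P * A) := by simp only [hGdef, Matrix.mul_assoc]
    rw [e1, Matrix.trace_mul_comm]
    have e2 : P * A * (P * R) = (P * A * P) * R := by simp only [Matrix.mul_assoc]
    rw [e2, hPAP]
  -- eigen facts
  set a := sInf (spectrum ℝ A) with hadef
  set lam := sInf (spectrum ℝ H) with hlamdef
  obtain ⟨⟨ia, hia⟩, hale⟩ := sInf_spectrum_facts hm hA.isHermitian
  obtain ⟨⟨ih, hih⟩, _⟩ := sInf_spectrum_facts hm hH.isHermitian
  have ha0 : 0 < a := by rw [hadef, hia]; exact hA.eigenvalues_pos ia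
  have hlam0 : 0 < lam := by rw [hlamdef, hih]; exact hH.eigenvalues_pos ih
  -- A - a • 1 psd
  have hAsub : (A - a • 1).PosSemidef := sub_smul_one_psd hA.isHermitian hale
  have key2 : 0 ≤ (G * (A - a • 1)).trace := trace_mul_nonneg hG.posSemidef hAsub
  have hexp : (G * (A - a • 1)).trace = (G * A).trace - a * G.trace := by
    have e : G * (A - a • 1) = G * A - a • G := by
      rw [Matrix.mul_sub, Matrix.mul_smul, mul_one]
    rw [e, Matrix.trace_sub, Matrix.trace_smul, smul_eq_mul]
  have key2' : a * G.trace ≤ t := by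
    have : a * G.trace ≤ (G * A).trace := by linarith [hexp ▸ key2]
    calc a * G.trace ≤ (G * A).trace := this
      _ = (M * R).trace := htrGA
      _ ≤ t := hopt
  -- lam⁻¹ ∈ spectrum G
  have hlaminv : lam⁻¹ ∈ spectrum ℝ G := by
    set u : (Matrix (Fin m) (Fin m) ℝ)ˣ := ⟨H, G, hHG, hGH⟩ with hudef
    have hmem : lam ∈ spectrum ℝ (u : Matrix (Fin m) (Fin m) ℝ) := by
      have : lam ∈ spectrum ℝ H := by
        rw [hH.isHermitian.spectrum_real_eq_range_eigenvalues]
        exact ⟨ih, hih.symm⟩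
      exact this
    have : lam⁻¹ ∈ (spectrum ℝ ((u : Matrix (Fin m) (Fin m) ℝ)))⁻¹ := by
      rw [Set.mem_inv]; simpa using hmem
    rw [spectrum.map_inv u] at this
    exact this
  have key3 : lam⁻¹ ≤ G.trace := by
    rw [hG.isHermitian.spectrum_real_eq_range_eigenvalues] at hlaminv
    obtain ⟨i, hi⟩ := hlaminv
    rw [trace_eq_sum_eig hG.isHermitian, ← hi]
    exact Finset.single_le_sum (fun j _ => hG.posSemidef.eigenvalues_nonneg j)
      (Finset.mem_univ i)
  -- combine
  have h1 : a * lam⁻¹ ≤ t :=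
    le_trans (mul_le_mul_of_nonneg_left key3 ha0.le) key2'
  calc a = lam * (a * lam⁻¹) := by field_simp
    _ ≤ lam * t := mul_le_mul_of_nonneg_left h1 hlam0.le
end

section
/- For the quadratic regression model x(s) = (1, s, s²)ᵀ on [-1,1] and the design ξ_τ = τδ_{-1} + (1-2τ)δ₀ + τδ₁ with τ = 1/4, ξ_{1/4} is A-optimal: the information matrix M = M(ξ_{1/4}) satisfies x(s)ᵀ M^{-2} x(s) ≤ tr(M^{-1}) for all s ∈ [-1,1], with equality at s ∈ {-1, 0, 1}. -/
open Matrix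

lemma stmt18_inv :
    (((1/4 : ℝ) • Matrix.vecMulVec ![1, -1, (-1:ℝ) ^ 2] ![1, -1, (-1:ℝ) ^ 2] +
        (1/2 : ℝ) • Matrix.vecMulVec ![1, 0, (0:ℝ) ^ 2] ![1, 0, (0:ℝ) ^ 2] +
        (1/4 : ℝ) • Matrix.vecMulVec ![1, 1, (1:ℝ) ^ 2] ![1, 1, (1:ℝ) ^ 2])⁻¹ :
        Matrix (Fin 3) (Fin 3) ℝ) =
      !![2, 0, -2; 0, 2, 0; -2, 0, 4] := by
  apply Matrix.inv_eq_right_inv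
  ext i j
  fin_cases i <;> fin_cases j <;>
    simp [Matrix.mul_apply, Fin.sum_univ_succ, Matrix.vecMulVec, Matrix.one_apply, Matrix.vecHead, Matrix.vecTail] <;>
    norm_num

/-- A-optimality of ξ_{1/4} = (1/4)δ₋₁ + (1/2)δ₀ + (1/4)δ₁ for quadratic
regression on [-1,1]: x(s)ᵀM⁻²x(s) ≤ tr(M⁻¹) on [-1,1], with equality at
s ∈ {-1,0,1}. -/
theorem stmt18 :
    let x : ℝ → Fin 3 → ℝ := fun s => ![1, s, s ^ 2]
    let M : Matrix (Fin 3) (Fin 3) ℝ :=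
      (1/4 : ℝ) • Matrix.vecMulVec (x (-1)) (x (-1)) +
        (1/2 : ℝ) • Matrix.vecMulVec (x 0) (x 0) +
        (1/4 : ℝ) • Matrix.vecMulVec (x 1) (x 1)
    (∀ s ∈ Set.Icc (-1 : ℝ) 1,
      x s ⬝ᵥ (M⁻¹ * M⁻¹) *ᵥ x s ≤ (M⁻¹).trace) ∧
    (∀ s ∈ ({-1, 0, 1} : Set ℝ),
      x s ⬝ᵥ (M⁻¹ * M⁻¹) *ᵥ x s = (M⁻¹).trace) := by
  intro x M
  have hM : M⁻¹ = !![2, 0, -2; 0, 2, 0; -2, 0, 4] := stmt18_inv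
  constructor
  · intro s hs
    obtain ⟨h1, h2⟩ := hs
    simp only [hM, x, dotProduct, Matrix.mulVec, Matrix.mul_apply,
      Fin.sum_univ_succ, Matrix.trace, Matrix.diag, Finset.sum_fin_eq_sum_range]
    norm_num [Matrix.cons_val_two, Matrix.vecHead, Matrix.vecTail]
    nlinarith [sq_nonneg s, sq_nonneg (s^2 - 1), mul_self_nonneg (s*(s-1)), mul_self_nonneg (s*(s+1))]
  · intro s hs
    simp only [Set.mem_insert_iff, Set.mem_singleton_iff] at hs
    rcases hs with rfl | rfl | rfl <;>
      · simp only [hM, x, dotProduct, Matrix.mulVec, Matrix.mul_apply,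
          Fin.sum_univ_succ, Matrix.trace, Matrix.diag, Finset.sum_fin_eq_sum_range]
        norm_num [Matrix.cons_val_two, Matrix.vecHead, Matrix.vecTail]
end

section
/- For the quadratic regression model x(s) = (1, s, s²)ᵀ on [-1,1], the design ξ_{1/3} = (1/3)δ_{-1} + (1/3)δ₀ + (1/3)δ₁ is D-optimal: with M = M(ξ_{1/3}), x(s)ᵀ M^{-1} x(s) ≤ 3 for all s ∈ [-1,1], with equality at s ∈ {-1, 0, 1}. -/
open Matrix

/-- D-optimality of ξ_{1/3} = (1/3)(δ₋₁ + δ₀ + δ₁) for quadratic regression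
on [-1,1]: x(s)ᵀM⁻¹x(s) ≤ 3 on [-1,1], with equality at s ∈ {-1,0,1}. -/
theorem stmt19 :
    let x : ℝ → Fin 3 → ℝ := fun s => ![1, s, s ^ 2]
    let M : Matrix (Fin 3) (Fin 3) ℝ :=
      (1/3 : ℝ) • Matrix.vecMulVec (x (-1)) (x (-1)) +
        (1/3 : ℝ) • Matrix.vecMulVec (x 0) (x 0) +
        (1/3 : ℝ) • Matrix.vecMulVec (x 1) (x 1)
    (∀ s ∈ Set.Icc (-1 : ℝ) 1, x s ⬝ᵥ M⁻¹ *ᵥ x s ≤ 3) ∧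
    (∀ s ∈ ({-1, 0, 1} : Set ℝ), x s ⬝ᵥ M⁻¹ *ᵥ x s = 3) := by
  intro x M
  have hM : M⁻¹ = !![(3:ℝ),0,-3; 0,3/2,0; -3,0,9/2] := by
    have h : M * !![(3:ℝ),0,-3; 0,3/2,0; -3,0,9/2] = 1 := by
      show (_ : Matrix (Fin 3) (Fin 3) ℝ) = 1
      ext i j
      simp [M, x, Matrix.vecMulVec, Matrix.mul_apply, Fin.sum_univ_three,
        Matrix.one_apply]
      fin_cases i <;> fin_cases j <;> norm_num [Fin.ext_iff]
    exact Matrix.inv_eq_right_inv h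
  have key : ∀ s : ℝ, x s ⬝ᵥ M⁻¹ *ᵥ x s = 3 - (9/2) * s^2 + (9/2) * s^4 := by
    intro s
    rw [hM]
    simp [x, Matrix.mulVec, dotProduct, Fin.sum_univ_three]
    ring
  constructor
  · intro s hs
    rw [key]
    obtain ⟨h1, h2⟩ := hs
    have hs1 : s^2 ≤ 1 := by nlinarith
    nlinarith [mul_le_mul_of_nonneg_left hs1 (sq_nonneg s)]
  · intro s hs
    rcases hs with h | h | h <;> rw [h, key] <;> norm_num
end
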